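/- arXiv:1301.7347 — 2 statements merged into one kernel-verified Lean document; each statement's English description precedes it below -/
import Mathlib

section
/- For all continuous functions a, b : 𝕋^d → ℂ, all ν, ν'' ∈ 𝔍(F) and all x ∈ 𝕋^d, the matrix Ω satisfies Σ_{ν' ∈ 𝔍(F)} Ω(a)_{ν,ν'}(x) · Ω(b)_{ν',ν''}(x) = Ω(ab)_{ν,ν''}(x); moreover Ω(ā)_{ν,ν'}(x) equals the complex conjugate of Ω(a)_{ν',ν}(x), and Ω(1)_{ν,ν'}(x) = δ_{ν,ν'} (Kronecker delta). In other words, a ↦ Ω(a) is a unital *-homomorphism from C(𝕋^d) into 𝔍(F)×𝔍(F) matrices over C(𝕋^d). -/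
open scoped BigOperators

/-- The endomorphism `σ_F` of the `d`-torus associated with the diagonal matrix
`F = diag(a_1, …, a_d)`: it raises the `j`-th coordinate to the power `a j`. -/
noncomputable def sigmaF {d : ℕ} (a : Fin d → ℕ) (y : Fin d → Circle) : Fin d → Circle :=
  fun j => y j ^ (a j)

/-- The endomorphism `σ_G` of the `d`-torus associated with an integer matrix `G`:
`σ_G(y)_j = ∏_k y_k ^ (G j k)`. -/
noncomputable def sigmaG {d : ℕ} (G : Matrix (Fin d) (Fin d) ℤ) (y : Fin d → Circle) :
    Fin d → Circle :=
  fun j => ∏ k, y k ^ (G j k)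

/-- The matrix `Ω(f)` indexed by `𝔍(F) = Π j, Fin (a j)`:
`Ω(f)_{ν,ν'}(x) = (1/N) ∑_{y : σ_F(y) = σ_G(x)} y^{ν'-ν} f(y)`, where `N = ∏ j, a j`. -/
noncomputable def OmegaMat {d : ℕ} (a : Fin d → ℕ) (G : Matrix (Fin d) (Fin d) ℤ)
    (f : (Fin d → Circle) → ℂ) (ν ν' : ∀ j, Fin (a j)) (x : Fin d → Circle) : ℂ :=
  (((∏ j, a j : ℕ)) : ℂ)⁻¹ *
    ∑ᶠ y ∈ {y : Fin d → Circle | sigmaF a y = sigmaG G x},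
      (∏ j, (y j : ℂ) ^ ((ν' j : ℤ) - (ν j : ℤ))) * f y

open Real

namespace OmegaAux

lemma circle_coe_pow (z : Circle) (n : ℕ) : ((z ^ n : Circle) : ℂ) = (z : ℂ) ^ n := by
  induction n with
  | zero => simp
  | succ n ih => rw [pow_succ, pow_succ, Circle.coe_mul, ih]

lemma circle_exp_pow (t : ℝ) (n : ℕ) : Circle.exp t ^ n = Circle.exp (n * t) := by
  ext
  rw [circle_coe_pow, Circle.coe_exp, Circle.coe_exp, ← Complex.exp_nat_mul]
  push_cast
  ring_nf

lemma circle_coe_zpow (z : Circle) (k : ℤ) : (z : ℂ) ^ k = ((z ^ k : Circle) : ℂ) := by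
  cases k with
  | ofNat n => simp [circle_coe_pow]
  | negSucc n => simp [zpow_negSucc, circle_coe_pow]

/-- Character sum: `∑_{m<n} ζ^m = n` if `ζ = exp(2πik/n)` is trivial, else `0`. -/
lemma charSum (n : ℕ) (hn : 0 < n) (k : ℤ) :
    ∑ m : Fin n, (Circle.exp (2 * Real.pi * k / n) : ℂ) ^ (m : ℕ)
      = if (n : ℤ) ∣ k then (n : ℂ) else 0 := by
  have hn0 : (n : ℝ) ≠ 0 := Nat.cast_ne_zero.2 hn.ne'
  have hn0' : (n : ℂ) ≠ 0 := Nat.cast_ne_zero.2 hn.ne'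
  set ζ : ℂ := (Circle.exp (2 * Real.pi * k / n) : ℂ) with hζdef
  have hζ : ζ = Complex.exp (((2 * Real.pi * k / n : ℝ) : ℂ) * Complex.I) := Circle.coe_exp _
  have hζn : ζ ^ n = 1 := by
    rw [hζ, ← Complex.exp_nat_mul]
    rw [show (n : ℂ) * (((2 * Real.pi * k / n : ℝ) : ℂ) * Complex.I)
        = (k : ℂ) * (2 * Real.pi * Complex.I) by push_cast; field_simp]
    exact_mod_cast Complex.exp_int_mul_two_pi_mul_I k
  rw [Fin.sum_univ_eq_sum_range (fun m => ζ ^ m)]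
  by_cases hdvd : (n : ℤ) ∣ k
  · obtain ⟨c, rfl⟩ := hdvd
    have h1 : ζ = 1 := by
      rw [hζ, Complex.exp_eq_one_iff]
      exact ⟨c, by push_cast; field_simp⟩
    simp [h1]
  · have h1 : ζ ≠ 1 := by
      intro h
      rw [hζ, Complex.exp_eq_one_iff] at h
      obtain ⟨m, hm⟩ := h
      apply hdvd
      have h2 : (k : ℂ) = (m : ℂ) * n := by
        have hI : (Complex.I : ℂ) ≠ 0 := Complex.I_ne_zero
        have hpi : (Real.pi : ℂ) ≠ 0 := by exact_mod_cast Real.pi_ne_zero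
        have hn0'' : (n : ℂ) ≠ 0 := hn0'
        push_cast at hm
        field_simp at hm
        have h2' : (2 * (Real.pi : ℂ) * Complex.I) * (k : ℂ)
            = (2 * (Real.pi : ℂ) * Complex.I) * ((m : ℂ) * n) := by linear_combination (2 * (Real.pi : ℂ) * Complex.I) * hm
        exact mul_left_cancel₀ (by simp [hpi, hI]) h2'
      have h3 : k = m * n := by exact_mod_cast h2
      exact ⟨m, by rw [h3, mul_comm]⟩
    rw [geom_sum_eq h1, hζn]
    simp [hdvd]


/-- Swap exponent and index in the character term. -/
lemma charTerm_swap (n : ℕ) (hn : 0 < n) (k : ℤ) (m : ℕ) :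
    (Circle.exp (2 * Real.pi * m / n) : ℂ) ^ k
      = (Circle.exp (2 * Real.pi * k / n) : ℂ) ^ (m : ℕ) := by
  rw [Circle.coe_exp, Circle.coe_exp, ← Complex.exp_int_mul, ← Complex.exp_nat_mul]
  congr 1
  push_cast
  have hn0 : (n : ℂ) ≠ 0 := Nat.cast_ne_zero.2 hn.ne'
  field_simp

lemma charSum' (n : ℕ) (hn : 0 < n) (k : ℤ) :
    ∑ m : Fin n, (Circle.exp (2 * Real.pi * m / n) : ℂ) ^ k
      = if (n : ℤ) ∣ k then (n : ℂ) else 0 := by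
  rw [← charSum n hn k]
  exact Finset.sum_congr rfl fun m _ => charTerm_swap n hn k m

lemma fin_dvd_iff {n : ℕ} (hn : 0 < n) (u v : Fin n) :
    (n : ℤ) ∣ ((u : ℤ) - (v : ℤ)) ↔ u = v := by
  constructor
  · intro h
    have hu : (u : ℤ) < n := by exact_mod_cast u.isLt
    have hv : (v : ℤ) < n := by exact_mod_cast v.isLt
    have hu0 : (0 : ℤ) ≤ (u : ℤ) := by positivity
    have hv0 : (0 : ℤ) ≤ (v : ℤ) := by positivity
    have h0 : (u : ℤ) - v = 0 := Int.eq_zero_of_abs_lt_dvd h (by rw [abs_lt]; omega)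
    have : (u : ℤ) = v := by omega
    exact Fin.ext (by exact_mod_cast this)
  · rintro rfl; simp

/-- A fixed `n`-th root of a circle element. -/
noncomputable def root (n : ℕ) (c : Circle) : Circle :=
  Circle.exp (Complex.arg (c : ℂ) / n)

lemma root_pow {n : ℕ} (hn : 0 < n) (c : Circle) : root n c ^ n = c := by
  rw [root, circle_exp_pow, mul_div_cancel₀ _ (show (n:ℝ) ≠ 0 from Nat.cast_ne_zero.2 hn.ne')]
  exact Circle.exp_arg c

/-- The parametrization of the fiber of `σ_F` over `c`. -/
noncomputable def Phi {d : ℕ} (a : Fin d → ℕ) (c : Fin d → Circle)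
    (μ : ∀ j, Fin (a j)) : Fin d → Circle :=
  fun j => root (a j) (c j) * Circle.exp (2 * Real.pi * μ j / a j)

lemma Phi_mem {d : ℕ} (a : Fin d → ℕ) (ha : ∀ j, 0 < a j) (c : Fin d → Circle)
    (μ : ∀ j, Fin (a j)) : sigmaF a (Phi a c μ) = c := by
  funext j
  have haj : ((a j : ℝ)) ≠ 0 := Nat.cast_ne_zero.2 (ha j).ne'
  show (Phi a c μ j) ^ (a j) = c j
  rw [Phi, mul_pow, root_pow (ha j), circle_exp_pow,
    show (a j : ℝ) * (2 * Real.pi * μ j / a j) = (μ j : ℤ) * (2 * Real.pi) by push_cast; field_simp,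
    Circle.exp_int_mul_two_pi, mul_one]

lemma Phi_inj {d : ℕ} (a : Fin d → ℕ) (ha : ∀ j, 0 < a j) (c : Fin d → Circle) :
    Function.Injective (Phi a c) := by
  intro μ μ' h
  funext j
  have haj : ((a j : ℝ)) ≠ 0 := Nat.cast_ne_zero.2 (ha j).ne'
  have hj : Phi a c μ j = Phi a c μ' j := congrFun h j
  rw [Phi] at hj
  have h2 : Circle.exp (2 * Real.pi * μ j / a j) = Circle.exp (2 * Real.pi * μ' j / a j) :=
    mul_left_cancel hj
  rw [Circle.exp_eq_exp] at h2
  obtain ⟨m, hm⟩ := h2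
  have hpi := Real.pi_ne_zero
  have key : ((μ j : ℤ) : ℝ) - ((μ' j : ℤ) : ℝ) = (m * a j : ℤ) := by
    have key0 : (2 * Real.pi) * (((μ j : ℤ) : ℝ) - ((μ' j : ℤ) : ℝ))
        = (2 * Real.pi) * ((m * a j : ℤ) : ℝ) := by push_cast; field_simp at hm; push_cast; linear_combination (2 * Real.pi) * hm
    exact mul_left_cancel₀ (by positivity) key0
  have key2 : (μ j : ℤ) - (μ' j : ℤ) = m * a j := by exact_mod_cast key
  exact (fin_dvd_iff (ha j) (μ j) (μ' j)).1 ⟨m, by rw [key2]; ring⟩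

lemma fiber_eq {d : ℕ} (a : Fin d → ℕ) (ha : ∀ j, 0 < a j) (c : Fin d → Circle) :
    {y : Fin d → Circle | sigmaF a y = c} = Set.range (Phi a c) := by
  apply Set.eq_of_subset_of_subset
  · intro y hy
    have hy' : ∀ j, y j ^ (a j) = c j := fun j => congrFun hy j
    have hex : ∀ j, ∃ m : Fin (a j), y j = root (a j) (c j) * Circle.exp (2 * Real.pi * m / a j) := by
      intro j
      have haj : ((a j : ℝ)) ≠ 0 := Nat.cast_ne_zero.2 (ha j).ne'
      have haj' : (0:ℤ) < (a j : ℤ) := by exact_mod_cast ha j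
      set z : Circle := y j / root (a j) (c j) with hz
      have hz1 : z ^ (a j) = 1 := by
        rw [hz, div_pow, hy' j, root_pow (ha j), div_self']
      obtain ⟨s, hs⟩ : ∃ s : ℝ, Circle.exp s = z := ⟨_, Circle.exp_arg z⟩
      have : Circle.exp ((a j) * s) = 1 := by rw [← circle_exp_pow, hs, hz1]
      rw [Circle.exp_eq_one] at this
      obtain ⟨m, hm⟩ := this
      refine ⟨⟨(m % (a j)).toNat, ?_⟩, ?_⟩
      · have h1 : 0 ≤ m % (a j) := Int.emod_nonneg m (by omega)
        have h2 : m % (a j) < a j := Int.emod_lt_of_pos m haj'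
        omega
      · have hexp : Circle.exp (2 * Real.pi * ((m % (a j)).toNat : ℝ) / a j) = z := by
          rw [← hs]
          rw [Circle.exp_eq_exp]
          refine ⟨-(m / (a j)), ?_⟩
          have hms : s = m * (2 * Real.pi) / a j := by
            field_simp at hm ⊢
            linarith [hm]
          have hmod : ((m % (a j)).toNat : ℝ) = (m : ℝ) - ((m / a j : ℤ) : ℝ) * a j := by
            have := Int.emod_emod_of_dvd
            have h1 : 0 ≤ m % (a j) := Int.emod_nonneg m (by omega)
            have h2 : (((m % (a j)).toNat : ℤ) : ℝ) = ((m - (a j) * (m / (a j)) : ℤ) : ℝ) := by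
              congr 1
              rw [Int.toNat_of_nonneg h1, Int.emod_def]
            push_cast at h2 ⊢
            linarith [h2]
          rw [hms, hmod]
          push_cast
          field_simp
          ring
        rw [hexp, hz, mul_div_cancel]
    choose m hmy using hex
    exact ⟨m, by funext j; exact (hmy j).symm⟩
  · rintro y ⟨μ, rfl⟩
    exact Phi_mem a ha c μ


lemma circle_exp_div (s t : ℝ) : Circle.exp s / Circle.exp t = Circle.exp (s - t) := by
  ext
  rw [Circle.coe_div, Circle.coe_exp, Circle.coe_exp, Circle.coe_exp, ← Complex.exp_sub]
  congr 1
  push_cast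
  ring

lemma phi_div_coe {d : ℕ} (a : Fin d → ℕ) (ha : ∀ j, 0 < a j) (c : Fin d → Circle)
    (μ μ' : ∀ j, Fin (a j)) (j : Fin d) :
    (Phi a c μ j : ℂ) * (Phi a c μ' j : ℂ)⁻¹
      = (Circle.exp (2 * Real.pi * (((μ j : ℤ) - (μ' j : ℤ)) : ℝ) / a j) : ℂ) := by
  have haj : ((a j : ℝ)) ≠ 0 := Nat.cast_ne_zero.2 (ha j).ne'
  have h1 : Phi a c μ j / Phi a c μ' j
      = Circle.exp (2 * Real.pi * (((μ j : ℤ) - (μ' j : ℤ)) : ℝ) / a j) := by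
    simp only [Phi]
    rw [mul_div_mul_comm, div_self', one_mul, circle_exp_div]
    congr 1
    push_cast
    field_simp
  calc (Phi a c μ j : ℂ) * (Phi a c μ' j : ℂ)⁻¹
      = ((Phi a c μ j / Phi a c μ' j : Circle) : ℂ) := by
        rw [Circle.coe_div]; rw [div_eq_mul_inv]
    _ = _ := by rw [h1]

lemma orth1 {d : ℕ} (a : Fin d → ℕ) (ha : ∀ j, 0 < a j) (c : Fin d → Circle)
    (μ μ' : ∀ j, Fin (a j)) :
    ∑ ν' : ∀ j, Fin (a j),
        ∏ j, ((Phi a c μ j : ℂ) ^ (ν' j : ℤ) * (Phi a c μ' j : ℂ) ^ (-((ν' j : ℕ) : ℤ)))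
      = if μ = μ' then ((∏ j, a j : ℕ) : ℂ) else 0 := by
  classical
  have h0 : (∑ ν' : ∀ j, Fin (a j),
        ∏ j, ((Phi a c μ j : ℂ) ^ (ν' j : ℤ) * (Phi a c μ' j : ℂ) ^ (-((ν' j : ℕ) : ℤ))))
      = ∏ j, ∑ m : Fin (a j), ((Phi a c μ j : ℂ) ^ (m : ℤ) * (Phi a c μ' j : ℂ) ^ (-((m : ℕ) : ℤ))) :=
    (Fintype.prod_sum fun j (m : Fin (a j)) =>
      ((Phi a c μ j : ℂ) ^ (m : ℤ) * (Phi a c μ' j : ℂ) ^ (-((m : ℕ) : ℤ)))).symm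
  rw [h0]
  have hinner : ∀ j, (∑ m : Fin (a j),
      ((Phi a c μ j : ℂ) ^ (m : ℤ) * (Phi a c μ' j : ℂ) ^ (-((m : ℕ) : ℤ))))
      = if μ j = μ' j then ((a j : ℕ) : ℂ) else 0 := by
    intro j
    have hterm : ∀ m : Fin (a j),
        (Phi a c μ j : ℂ) ^ (m : ℤ) * (Phi a c μ' j : ℂ) ^ (-((m : ℕ) : ℤ))
        = (Circle.exp (2 * Real.pi * (((μ j : ℤ) - (μ' j : ℤ)) : ℝ) / a j) : ℂ) ^ (m : ℕ) := by
      intro m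
      rw [zpow_neg, ← inv_zpow, show ((m : Fin (a j)) : ℤ) = ((m : ℕ) : ℤ) from rfl,
        zpow_natCast, zpow_natCast, ← mul_pow, phi_div_coe a ha c μ μ' j]
    rw [Finset.sum_congr rfl (fun m _ => hterm m)]
    rw [show (2 * Real.pi * (((μ j : ℤ) - (μ' j : ℤ)) : ℝ) / a j)
        = 2 * Real.pi * (((μ j : ℤ) - (μ' j : ℤ) : ℤ) : ℝ) / a j by push_cast; ring]
    rw [charSum (a j) (ha j) ((μ j : ℤ) - (μ' j : ℤ))]
    exact if_congr (fin_dvd_iff (ha j) (μ j) (μ' j)) rfl rfl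
  rw [Finset.prod_congr rfl (fun j _ => hinner j)]
  by_cases h : μ = μ'
  · subst h
    simp
  · obtain ⟨j, hj⟩ := Function.ne_iff.1 h
    rw [if_neg h]
    exact Finset.prod_eq_zero (Finset.mem_univ j) (if_neg hj)

lemma orth2 {d : ℕ} (a : Fin d → ℕ) (ha : ∀ j, 0 < a j) (c : Fin d → Circle)
    (ν ν' : ∀ j, Fin (a j)) :
    ∑ μ : ∀ j, Fin (a j), ∏ j, (Phi a c μ j : ℂ) ^ ((ν' j : ℤ) - (ν j : ℤ))
      = if ν = ν' then ((∏ j, a j : ℕ) : ℂ) else 0 := by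
  classical
  have h0 : (∑ μ : ∀ j, Fin (a j), ∏ j, (Phi a c μ j : ℂ) ^ ((ν' j : ℤ) - (ν j : ℤ)))
      = ∏ j, ∑ m : Fin (a j),
          ((root (a j) (c j) * Circle.exp (2 * Real.pi * m / a j) : Circle) : ℂ)
            ^ ((ν' j : ℤ) - (ν j : ℤ)) :=
    (Fintype.prod_sum fun j (m : Fin (a j)) =>
      ((root (a j) (c j) * Circle.exp (2 * Real.pi * m / a j) : Circle) : ℂ)
        ^ ((ν' j : ℤ) - (ν j : ℤ))).symm
  rw [h0]
  have hinner : ∀ j, (∑ m : Fin (a j),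
      ((root (a j) (c j) * Circle.exp (2 * Real.pi * m / a j) : Circle) : ℂ)
        ^ ((ν' j : ℤ) - (ν j : ℤ)))
      = (root (a j) (c j) : ℂ) ^ ((ν' j : ℤ) - (ν j : ℤ)) *
          (if ν' j = ν j then ((a j : ℕ) : ℂ) else 0) := by
    intro j
    have hterm : ∀ m : Fin (a j),
        ((root (a j) (c j) * Circle.exp (2 * Real.pi * m / a j) : Circle) : ℂ)
          ^ ((ν' j : ℤ) - (ν j : ℤ))
        = (root (a j) (c j) : ℂ) ^ ((ν' j : ℤ) - (ν j : ℤ)) *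
            (Circle.exp (2 * Real.pi * m / a j) : ℂ) ^ ((ν' j : ℤ) - (ν j : ℤ)) := by
      intro m
      rw [Circle.coe_mul, mul_zpow]
    rw [Finset.sum_congr rfl (fun m _ => hterm m), ← Finset.mul_sum,
      charSum' (a j) (ha j) ((ν' j : ℤ) - (ν j : ℤ))]
    exact congrArg _ (if_congr (fin_dvd_iff (ha j) (ν' j) (ν j)) rfl rfl)
  rw [Finset.prod_congr rfl (fun j _ => hinner j)]
  by_cases h : ν = ν'
  · subst h
    have : ∀ j, (root (a j) (c j) : ℂ) ^ ((ν j : ℤ) - (ν j : ℤ)) *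
        (if ν j = ν j then ((a j : ℕ) : ℂ) else 0) = (a j : ℂ) := by
      intro j; rw [sub_self, zpow_zero, one_mul, if_pos rfl]
    rw [Finset.prod_congr rfl (fun j _ => this j), if_pos rfl]
    push_cast
    ring
  · obtain ⟨j, hj⟩ := Function.ne_iff.1 h
    rw [if_neg h]
    refine Finset.prod_eq_zero (Finset.mem_univ j) ?_
    rw [if_neg (fun hh => hj hh.symm), mul_zero]

end OmegaAux

namespace OmegaAux

lemma Omega_eq {d : ℕ} (a : Fin d → ℕ) (ha : ∀ j, 0 < a j) (G : Matrix (Fin d) (Fin d) ℤ)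
    (f : (Fin d → Circle) → ℂ) (ν ν' : ∀ j, Fin (a j)) (x : Fin d → Circle) :
    OmegaMat a G f ν ν' x = ((∏ j, a j : ℕ) : ℂ)⁻¹ *
      ∑ μ : ∀ j, Fin (a j),
        (∏ j, (Phi a (sigmaG G x) μ j : ℂ) ^ ((ν' j : ℤ) - (ν j : ℤ)))
          * f (Phi a (sigmaG G x) μ) := by
  rw [OmegaMat, fiber_eq a ha (sigmaG G x), finsum_mem_range (Phi_inj a ha _),
    finsum_eq_sum_of_fintype]

lemma mult_key {d : ℕ} (a : Fin d → ℕ) (ha : ∀ j, 0 < a j) (c : Fin d → Circle)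
    (ν ν'' μ μ' : ∀ j, Fin (a j)) :
    ∑ ν' : ∀ j, Fin (a j),
        (∏ j, (Phi a c μ j : ℂ) ^ ((ν' j : ℤ) - (ν j : ℤ)))
          * (∏ j, (Phi a c μ' j : ℂ) ^ ((ν'' j : ℤ) - (ν' j : ℤ)))
      = (if μ = μ' then ((∏ j, a j : ℕ) : ℂ) else 0)
          * ∏ j, ((Phi a c μ j : ℂ) ^ (-(ν j : ℤ)) * (Phi a c μ' j : ℂ) ^ (ν'' j : ℤ)) := by
  have hterm : ∀ ν' : ∀ j, Fin (a j),
      (∏ j, (Phi a c μ j : ℂ) ^ ((ν' j : ℤ) - (ν j : ℤ)))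
        * (∏ j, (Phi a c μ' j : ℂ) ^ ((ν'' j : ℤ) - (ν' j : ℤ)))
      = (∏ j, ((Phi a c μ j : ℂ) ^ (ν' j : ℤ) * (Phi a c μ' j : ℂ) ^ (-((ν' j : ℕ) : ℤ))))
        * ∏ j, ((Phi a c μ j : ℂ) ^ (-(ν j : ℤ)) * (Phi a c μ' j : ℂ) ^ (ν'' j : ℤ)) := by
    intro ν'
    rw [← Finset.prod_mul_distrib, ← Finset.prod_mul_distrib]
    apply Finset.prod_congr rfl
    intro j _
    rw [show ((ν' j : ℤ) - (ν j : ℤ)) = (ν' j : ℤ) + (-(ν j : ℤ)) by ring,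
      show ((ν'' j : ℤ) - (ν' j : ℤ)) = (-((ν' j : ℕ) : ℤ)) + (ν'' j : ℤ) by push_cast; ring,
      zpow_add₀ (Circle.coe_ne_zero _), zpow_add₀ (Circle.coe_ne_zero _)]
    ring
  rw [Finset.sum_congr rfl fun ν' _ => hterm ν', ← Finset.sum_mul, orth1 a ha c μ μ']

lemma mult_part {d : ℕ} (a : Fin d → ℕ) (ha : ∀ j, 0 < a j) (c : Fin d → Circle)
    (f g : (Fin d → Circle) → ℂ) (ν ν'' : ∀ j, Fin (a j)) :
    ∑ ν' : ∀ j, Fin (a j),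
        (((∏ j, a j : ℕ) : ℂ)⁻¹ *
            ∑ μ : ∀ j, Fin (a j),
              (∏ j, (Phi a c μ j : ℂ) ^ ((ν' j : ℤ) - (ν j : ℤ))) * f (Phi a c μ)) *
        (((∏ j, a j : ℕ) : ℂ)⁻¹ *
            ∑ μ : ∀ j, Fin (a j),
              (∏ j, (Phi a c μ j : ℂ) ^ ((ν'' j : ℤ) - (ν' j : ℤ))) * g (Phi a c μ))
      = ((∏ j, a j : ℕ) : ℂ)⁻¹ *
          ∑ μ : ∀ j, Fin (a j),
            (∏ j, (Phi a c μ j : ℂ) ^ ((ν'' j : ℤ) - (ν j : ℤ)))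
              * (f (Phi a c μ) * g (Phi a c μ)) := by
  classical
  have hN0 : ((∏ j, a j : ℕ) : ℂ) ≠ 0 := by
    push_cast
    exact Finset.prod_ne_zero_iff.2 fun j _ => Nat.cast_ne_zero.2 (ha j).ne'
  set N : ℂ := ((∏ j, a j : ℕ) : ℂ) with hNdef
  set T : (∀ j, Fin (a j)) → (∀ j, Fin (a j)) → (∀ j, Fin (a j)) → ℂ := fun μ μ' ν' =>
    ((∏ j, (Phi a c μ j : ℂ) ^ ((ν' j : ℤ) - (ν j : ℤ))) * f (Phi a c μ)) *
    ((∏ j, (Phi a c μ' j : ℂ) ^ ((ν'' j : ℤ) - (ν' j : ℤ))) * g (Phi a c μ')) with hT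
  have step1 : (∑ ν' : ∀ j, Fin (a j),
      (N⁻¹ * ∑ μ : ∀ j, Fin (a j), (∏ j, (Phi a c μ j : ℂ) ^ ((ν' j : ℤ) - (ν j : ℤ))) * f (Phi a c μ)) *
      (N⁻¹ * ∑ μ : ∀ j, Fin (a j), (∏ j, (Phi a c μ j : ℂ) ^ ((ν'' j : ℤ) - (ν' j : ℤ))) * g (Phi a c μ)))
      = N⁻¹ * N⁻¹ * ∑ ν' : ∀ j, Fin (a j), ∑ μ : ∀ j, Fin (a j), ∑ μ' : ∀ j, Fin (a j), T μ μ' ν' := by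
    rw [Finset.mul_sum]
    apply Finset.sum_congr rfl
    intro ν' _
    rw [mul_mul_mul_comm, Finset.sum_mul_sum]
  rw [step1, Finset.sum_comm]
  have step2 : ∀ μ : ∀ j, Fin (a j), (∑ ν' : ∀ j, Fin (a j), ∑ μ' : ∀ j, Fin (a j), T μ μ' ν') = ∑ μ' : ∀ j, Fin (a j), ∑ ν' : ∀ j, Fin (a j), T μ μ' ν' :=
    fun μ => Finset.sum_comm
  rw [Finset.sum_congr rfl fun μ _ => step2 μ]
  have step3 : ∀ μ μ' : ∀ j, Fin (a j), (∑ ν' : ∀ j, Fin (a j), T μ μ' ν')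
      = (if μ = μ' then N else 0)
          * ((∏ j, ((Phi a c μ j : ℂ) ^ (-(ν j : ℤ)) * (Phi a c μ' j : ℂ) ^ (ν'' j : ℤ)))
            * (f (Phi a c μ) * g (Phi a c μ'))) := by
    intro μ μ'
    have : ∀ ν' : ∀ j, Fin (a j), T μ μ' ν'
        = ((∏ j, (Phi a c μ j : ℂ) ^ ((ν' j : ℤ) - (ν j : ℤ)))
            * (∏ j, (Phi a c μ' j : ℂ) ^ ((ν'' j : ℤ) - (ν' j : ℤ))))
          * (f (Phi a c μ) * g (Phi a c μ')) := by
      intro ν'; rw [hT]; ring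
    rw [Finset.sum_congr rfl fun ν' _ => this ν', ← Finset.sum_mul,
      mult_key a ha c ν ν'' μ μ', mul_assoc]
  rw [Finset.sum_congr rfl fun μ _ => Finset.sum_congr rfl fun μ' _ => step3 μ μ']
  have step4 : ∀ μ : ∀ j, Fin (a j), (∑ μ' : ∀ j, Fin (a j), (if μ = μ' then N else 0)
      * ((∏ j, ((Phi a c μ j : ℂ) ^ (-(ν j : ℤ)) * (Phi a c μ' j : ℂ) ^ (ν'' j : ℤ)))
        * (f (Phi a c μ) * g (Phi a c μ'))))
      = N * ((∏ j, (Phi a c μ j : ℂ) ^ ((ν'' j : ℤ) - (ν j : ℤ)))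
          * (f (Phi a c μ) * g (Phi a c μ))) := by
    intro μ
    simp only [ite_mul, zero_mul]
    rw [Finset.sum_ite_eq Finset.univ μ, if_pos (Finset.mem_univ μ)]
    congr 2
    apply Finset.prod_congr rfl
    intro j _
    rw [← zpow_add₀ (Circle.coe_ne_zero _)]
    congr 1
    ring
  rw [Finset.sum_congr rfl fun μ _ => step4 μ, ← Finset.mul_sum]
  field_simp

lemma conj_circle_zpow (z : Circle) (k : ℤ) :
    (starRingEnd ℂ) ((z : ℂ) ^ k) = (z : ℂ) ^ (-k) := by
  rw [map_zpow₀, ← Circle.coe_inv_eq_conj, Circle.coe_inv, inv_zpow, ← zpow_neg]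

end OmegaAux

open OmegaAux

/-- `a ↦ Ω(a)` is a unital `*`-homomorphism from `C(𝕋^d)` into `𝔍(F) × 𝔍(F)` matrices
over `C(𝕋^d)`: it is multiplicative, `*`-preserving and unital, entrywise and pointwise. -/
theorem omega_unital_star_hom {d : ℕ} (hd : 1 ≤ d) (a : Fin d → ℕ) (ha : ∀ j, 0 < a j)
    (G : Matrix (Fin d) (Fin d) ℤ) (hG : G.det ≠ 0)
    (f g : (Fin d → Circle) → ℂ) (hf : Continuous f) (hg : Continuous g)
    (ν ν'' : ∀ j, Fin (a j)) (x : Fin d → Circle) :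
    (∑ ν' : ∀ j, Fin (a j), OmegaMat a G f ν ν' x * OmegaMat a G g ν' ν'' x
        = OmegaMat a G (fun y => f y * g y) ν ν'' x) ∧
    (∀ ν' : ∀ j, Fin (a j), OmegaMat a G (fun y => starRingEnd ℂ (f y)) ν ν' x
        = starRingEnd ℂ (OmegaMat a G f ν' ν x)) ∧
    (∀ ν' : ∀ j, Fin (a j), OmegaMat a G (fun _ => (1 : ℂ)) ν ν' x
        = if ν = ν' then 1 else 0) := by
  classical
  set c : Fin d → Circle := sigmaG G x with hc
  set Φ : (∀ j, Fin (a j)) → (Fin d → Circle) := Phi a c with hΦ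
  set N : ℕ := ∏ j, a j with hN
  have hN0 : (N : ℂ) ≠ 0 := by
    rw [hN]
    push_cast
    exact Finset.prod_ne_zero_iff.2 fun j _ => Nat.cast_ne_zero.2 (ha j).ne'
  refine ⟨?_, ?_, ?_⟩
  · -- multiplicativity
    have h1 : ∀ ν' : ∀ j, Fin (a j),
        OmegaMat a G f ν ν' x * OmegaMat a G g ν' ν'' x
        = (((∏ j, a j : ℕ) : ℂ)⁻¹ *
            ∑ μ : ∀ j, Fin (a j),
              (∏ j, (Phi a c μ j : ℂ) ^ ((ν' j : ℤ) - (ν j : ℤ))) * f (Phi a c μ)) *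
          (((∏ j, a j : ℕ) : ℂ)⁻¹ *
            ∑ μ : ∀ j, Fin (a j),
              (∏ j, (Phi a c μ j : ℂ) ^ ((ν'' j : ℤ) - (ν' j : ℤ))) * g (Phi a c μ)) := by
      intro ν'
      rw [Omega_eq a ha G f ν ν' x, Omega_eq a ha G g ν' ν'' x]
    rw [Finset.sum_congr rfl fun ν' _ => h1 ν', mult_part a ha c f g ν ν'',
      Omega_eq a ha G (fun y => f y * g y) ν ν'' x]
  · -- star
    intro ν'
    rw [Omega_eq a ha G _ ν ν' x, Omega_eq a ha G f ν' ν x, map_mul, map_sum]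
    congr 1
    · rw [map_inv₀, Complex.conj_natCast]
    · apply Finset.sum_congr rfl
      intro μ _
      rw [map_mul, map_prod]
      congr 1
      apply Finset.prod_congr rfl
      intro j _
      rw [conj_circle_zpow, neg_sub]
  · -- unital
    intro ν'
    rw [Omega_eq a ha G _ ν ν' x]
    simp only [mul_one]
    rw [orth2 a ha c ν ν']
    by_cases h : ν = ν'
    · rw [if_pos h, if_pos h, inv_mul_cancel₀ hN0]
    · rw [if_neg h, if_neg h, mul_zero]
end

section
/- Suppose G ∈ M_d(ℤ) is an integer dilation matrix, i.e., every root λ ∈ ℂ of the characteristic polynomial of G satisfies |λ| > 1. Then for each 1 ≤ k ≤ d, the 𝔍_k×𝔍_k integer matrix B_k with (I,J) entry det G_{J,I} satisfies det(1 − B_k) ≠ 0; that is, 1 is not an eigenvalue of B_k. -/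
open scoped BigOperators

/-- For `I, J` `k`-element subsets of `Fin d` and `G ∈ M_d(ℤ)`, the minor `det G_{J,I}`:
the determinant of the `k × k` submatrix of `G` with rows indexed by `J` and columns by `I`,
each taken in increasing order. -/
def minorJI {d k : ℕ} (G : Matrix (Fin d) (Fin d) ℤ)
    (J I : {s : Finset (Fin d) // s.card = k}) : ℤ :=
  (G.submatrix (fun i : Fin k => ((J.1.orderIsoOfFin J.2 i : Fin d)))
    (fun i : Fin k => ((I.1.orderIsoOfFin I.2 i : Fin d)))).det

namespace CompoundAux

open Matrix Finset Function Polynomial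

variable {R : Type*} [CommRing R] {d k : ℕ}

/-- `k`-element subsets of `Fin d`. -/
abbrev Idx (d k : ℕ) := {s : Finset (Fin d) // s.card = k}

/-- The increasing enumeration of a `k`-element subset of `Fin d`. -/
def emb (I : Idx d k) : Fin k → Fin d := fun i => I.1.orderIsoOfFin I.2 i

lemma emb_mem (I : Idx d k) (i : Fin k) : emb I i ∈ I.1 := (I.1.orderIsoOfFin I.2 i).2

lemma emb_injective (I : Idx d k) : Function.Injective (emb I) := by
  intro i j h
  exact (I.1.orderIsoOfFin I.2).injective (Subtype.coe_injective h)

lemma image_emb (I : Idx d k) : Finset.image (emb I) Finset.univ = I.1 := by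
  apply Finset.eq_of_subset_of_card_le
  · intro x hx
    simp only [Finset.mem_image] at hx
    obtain ⟨i, _, rfl⟩ := hx
    exact emb_mem I i
  · rw [Finset.card_image_of_injective _ (emb_injective I), Finset.card_univ,
      Fintype.card_fin, I.2]

/-- The map from pairs (subset, permutation) to injective tuples. -/
noncomputable def pairToInj (x : Idx d k × Equiv.Perm (Fin k)) :
    {r : Fin k → Fin d // Function.Injective r} :=
  ⟨emb x.1 ∘ x.2, (emb_injective x.1).comp x.2.injective⟩

lemma pairToInj_bijective : Function.Bijective (pairToInj (d := d) (k := k)) := by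
  classical
  constructor
  · rintro ⟨S, σ⟩ ⟨T, τ⟩ h
    have h' : emb S ∘ σ = emb T ∘ τ := congrArg Subtype.val h
    have hST : S = T := by
      apply Subtype.ext
      have h1 : Finset.image (emb S ∘ σ) Finset.univ = S.1 := by
        rw [← Finset.image_image, Finset.image_univ_equiv, image_emb]
      have h2 : Finset.image (emb T ∘ τ) Finset.univ = T.1 := by
        rw [← Finset.image_image, Finset.image_univ_equiv, image_emb]
      rw [← h1, ← h2, h']
    subst hST
    have hστ : σ = τ :=
      Equiv.ext fun i => emb_injective S (congrFun h' i)
    rw [hστ]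
  · rintro ⟨r, hr⟩
    have hScard : (Finset.image r Finset.univ).card = k := by
      rw [Finset.card_image_of_injective _ hr, Finset.card_univ, Fintype.card_fin]
    set S : Idx d k := ⟨Finset.image r Finset.univ, hScard⟩ with hS
    have hmem : ∀ i, r i ∈ S.1 := fun i => Finset.mem_image_of_mem r (Finset.mem_univ i)
    set ψ : Fin k → {x // x ∈ S.1} := fun i => ⟨r i, hmem i⟩ with hψdef
    have hψinj : Function.Injective ψ := by
      intro i j h
      exact hr (congrArg Subtype.val h)
    have hψbij : Function.Bijective ψ := by
      rw [Fintype.bijective_iff_injective_and_card]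
      refine ⟨hψinj, ?_⟩
      rw [Fintype.card_coe, hScard, Fintype.card_fin]
    refine ⟨⟨S, (Equiv.ofBijective ψ hψbij).trans (S.1.orderIsoOfFin S.2).toEquiv.symm⟩, ?_⟩
    apply Subtype.ext
    funext i
    show ((S.1.orderIsoOfFin S.2) ((S.1.orderIsoOfFin S.2).toEquiv.symm (ψ i)) : Fin d) = r i
    simp
    rfl

/-- **Cauchy–Binet formula**. -/
theorem cauchyBinet (A : Matrix (Fin k) (Fin d) R) (B : Matrix (Fin d) (Fin k) R) :
    (A * B).det = ∑ S : Idx d k,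
      (A.submatrix id (emb S)).det * (B.submatrix (emb S) id).det := by
  classical
  have hAB : A * B = Matrix.of fun i => ∑ x : Fin d, A i x • B x := by
    ext i j
    simp [Matrix.mul_apply]
  rw [hAB]
  have expand : (Matrix.of fun i => ∑ x : Fin d, A i x • B x).det
      = ∑ r : Fin k → Fin d, (∏ i, A i (r i)) * (B.submatrix r id).det := by
    calc (Matrix.of fun i => ∑ x : Fin d, A i x • B x).det
        = Matrix.detRowAlternating.toMultilinearMap (fun i => ∑ x : Fin d, A i x • B x) := rfl
      _ = ∑ r : Fin k → Fin d,
            Matrix.detRowAlternating.toMultilinearMap (fun i => A i (r i) • B (r i)) :=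
          MultilinearMap.map_sum _ _
      _ = ∑ r : Fin k → Fin d, (∏ i, A i (r i)) * (B.submatrix r id).det := by
          refine Finset.sum_congr rfl fun r _ => ?_
          rw [MultilinearMap.map_smul_univ]
          rfl
  rw [expand]
  have step2 : ∑ r : Fin k → Fin d, (∏ i, A i (r i)) * (B.submatrix r id).det
      = ∑ r : {r : Fin k → Fin d // Function.Injective r},
          (∏ i, A i (r.1 i)) * (B.submatrix r.1 id).det := by
    rw [← Finset.sum_filter_add_sum_filter_not Finset.univ (fun r => Function.Injective r)]
    have hz : ∑ r ∈ Finset.univ.filter (fun r => ¬ Function.Injective r),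
        (∏ i, A i (r i)) * (B.submatrix r id).det = 0 := by
      refine Finset.sum_eq_zero fun r hr => ?_
      rw [Finset.mem_filter] at hr
      have : (B.submatrix r id).det = 0 := by
        apply Matrix.detRowAlternating.map_eq_zero_of_not_injective
        intro hc
        exact hr.2 fun a b hab => hc (show B (r a) = B (r b) from by rw [hab])
      rw [this, mul_zero]
    rw [hz, add_zero]
    exact Finset.sum_subtype _ (by simp) _
  rw [step2]
  have step3 : ∑ r : {r : Fin k → Fin d // Function.Injective r},
          (∏ i, A i (r.1 i)) * (B.submatrix r.1 id).det
      = ∑ x : Idx d k × Equiv.Perm (Fin k),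
          (∏ i, A i (emb x.1 (x.2 i))) * (B.submatrix (emb x.1 ∘ x.2) id).det := by
    refine (Fintype.sum_bijective _ pairToInj_bijective _ _ fun x => rfl).symm
  rw [step3, Fintype.sum_prod_type]
  refine Finset.sum_congr rfl fun S _ => ?_
  have inner : ∀ σ : Equiv.Perm (Fin k),
      (B.submatrix (emb S ∘ σ) id).det = Equiv.Perm.sign σ * (B.submatrix (emb S) id).det := by
    intro σ
    have : B.submatrix (emb S ∘ σ) id = (B.submatrix (emb S) id).submatrix σ id := by
      rw [Matrix.submatrix_submatrix]; rfl
    rw [this, Matrix.det_permute]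
  calc ∑ σ : Equiv.Perm (Fin k),
        (∏ i, A i (emb S (σ i))) * (B.submatrix (emb S ∘ σ) id).det
      = (∑ σ : Equiv.Perm (Fin k), ((Equiv.Perm.sign σ : ℤ) : R) * ∏ i, A i (emb S (σ i)))
          * (B.submatrix (emb S) id).det := by
        rw [Finset.sum_mul]
        refine Finset.sum_congr rfl fun σ _ => ?_
        rw [inner σ]
        ring
    _ = (A.submatrix id (emb S)).det * (B.submatrix (emb S) id).det := by
        congr 1
        rw [← Matrix.det_transpose (A.submatrix id (emb S)), Matrix.det_apply']
        rfl

/-- The `k`-th compound matrix. -/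
def cpd (k : ℕ) (A : Matrix (Fin d) (Fin d) R) : Matrix (Idx d k) (Idx d k) R :=
  Matrix.of fun I J => (A.submatrix (emb I) (emb J)).det

lemma cpd_apply (A : Matrix (Fin d) (Fin d) R) (I J : Idx d k) :
    cpd k A I J = (A.submatrix (emb I) (emb J)).det := rfl

theorem cpd_mul (A B : Matrix (Fin d) (Fin d) R) :
    cpd k (A * B) = cpd k A * cpd k B := by
  ext I J
  rw [Matrix.mul_apply, cpd_apply]
  have h1 : (A * B).submatrix (emb I) (emb J)
      = (A.submatrix (emb I) id) * (B.submatrix id (emb J)) := by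
    have := Matrix.submatrix_mul_equiv A B (emb I) (Equiv.refl (Fin d)) (emb J)
    simpa using this.symm
  rw [h1, cauchyBinet]
  refine Finset.sum_congr rfl fun S _ => ?_
  rw [Matrix.submatrix_submatrix, Matrix.submatrix_submatrix]
  simp [cpd_apply, Function.comp]

theorem cpd_one : cpd k (1 : Matrix (Fin d) (Fin d) R) = 1 := by
  ext I J
  by_cases h : I = J
  · subst h
    rw [cpd_apply, Matrix.submatrix_one _ (emb_injective I), Matrix.det_one, Matrix.one_apply_eq]
  · rw [cpd_apply, Matrix.one_apply_ne h]
    have hsub : ¬ (J.1 ⊆ I.1) := by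
      intro hsub
      exact h (Subtype.ext (Finset.eq_of_subset_of_card_le hsub (by rw [I.2, J.2])).symm)
    obtain ⟨x, hxJ, hxI⟩ := Finset.not_subset.mp hsub
    set j0 : Fin k := (J.1.orderIsoOfFin J.2).symm ⟨x, hxJ⟩ with hj0
    have hembj0 : emb J j0 = x := by
      show ((J.1.orderIsoOfFin J.2) ((J.1.orderIsoOfFin J.2).symm ⟨x, hxJ⟩) : Fin d) = x
      simp
    apply Matrix.det_eq_zero_of_column_eq_zero j0
    intro i
    rw [Matrix.submatrix_apply, hembj0]
    exact Matrix.one_apply_ne fun hc => hxI (hc ▸ emb_mem I i)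

theorem cpd_map {S : Type*} [CommRing S] (f : R →+* S) (A : Matrix (Fin d) (Fin d) R) :
    cpd k (A.map f) = (cpd k A).map f := by
  ext I J
  rw [Matrix.map_apply, cpd_apply, cpd_apply, Matrix.submatrix_map, RingHom.map_det f,
    RingHom.mapMatrix_apply]

lemma eval_charpoly {n : ℕ} (M : Matrix (Fin n) (Fin n) R) (z : R) :
    M.charpoly.eval z = (z • (1 : Matrix (Fin n) (Fin n) R) - M).det := by
  rw [Matrix.charpoly, ← Polynomial.coe_evalRingHom, RingHom.map_det]
  congr 1
  ext i j
  by_cases h : i = j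
  · subst h
    simp [charmatrix_apply_eq, Matrix.one_apply_eq]
  · simp [charmatrix_apply_ne _ _ _ h, Matrix.one_apply_ne h]

lemma norm_det_le {k : ℕ} (M : Matrix (Fin k) (Fin k) ℂ) (c : ℝ)
    (h : ∀ i j, ‖M i j‖ ≤ c) : ‖M.det‖ ≤ (Nat.factorial k) * c ^ k := by
  classical
  rw [Matrix.det_apply]
  calc ‖∑ σ : Equiv.Perm (Fin k), Equiv.Perm.sign σ • ∏ i, M (σ i) i‖
      ≤ ∑ σ : Equiv.Perm (Fin k), ‖Equiv.Perm.sign σ • ∏ i, M (σ i) i‖ := norm_sum_le _ _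
    _ ≤ ∑ _σ : Equiv.Perm (Fin k), c ^ k := by
        refine Finset.sum_le_sum fun σ _ => ?_
        have h1 : ‖Equiv.Perm.sign σ • ∏ i, M (σ i) i‖ = ‖∏ i, M (σ i) i‖ := by
          rcases Int.units_eq_one_or (Equiv.Perm.sign σ) with hs | hs <;>
            simp [hs, Units.smul_def]
        rw [h1]
        calc ‖∏ i, M (σ i) i‖ = ∏ i, ‖M (σ i) i‖ := by
              rw [norm_prod]
          _ ≤ ∏ _i : Fin k, c := Finset.prod_le_prod (fun _ _ => norm_nonneg _)
              (fun i _ => h _ _)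
          _ = c ^ k := by simp [Finset.prod_const]
    _ = (Nat.factorial k) * c ^ k := by
        rw [Finset.sum_const, Finset.card_univ, Fintype.card_perm, Fintype.card_fin,
          nsmul_eq_mul]

section Inverse

variable (Gc : Matrix (Fin d) (Fin d) ℂ)
  (hG : ∀ z : ℂ, Gc.charpoly.IsRoot z → 1 < ‖z‖)

include hG in
lemma det_Gc_ne_zero : Gc.det ≠ 0 := by
  rw [Matrix.det_eq_prod_roots_charpoly]
  apply Multiset.prod_ne_zero
  intro h0
  have hne : Gc.charpoly ≠ 0 := Gc.charpoly_monic.ne_zero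
  have hr : Gc.charpoly.IsRoot 0 := (Polynomial.mem_roots hne).mp h0
  have h1 := hG 0 hr
  rw [norm_zero] at h1
  linarith

include hG in
lemma inv_root_lt_one (z : ℂ) (hz : (Gc⁻¹).charpoly.IsRoot z) : ‖z‖ < 1 := by
  have hdetG : IsUnit Gc.det := isUnit_iff_ne_zero.mpr (det_Gc_ne_zero Gc hG)
  have hHG : Gc⁻¹ * Gc = 1 := Matrix.nonsing_inv_mul Gc hdetG
  have hdet : (z • (1 : Matrix (Fin d) (Fin d) ℂ) - Gc⁻¹).det = 0 := by
    rw [← eval_charpoly]; exact hz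
  have hfact : z • (1 : Matrix (Fin d) (Fin d) ℂ) - Gc⁻¹ = Gc⁻¹ * (z • Gc - 1) := by
    rw [Matrix.mul_sub, mul_one, Matrix.mul_smul, hHG]
  have hdet2 : (z • Gc - 1 : Matrix (Fin d) (Fin d) ℂ).det = 0 := by
    have hthis := hdet
    rw [hfact, Matrix.det_mul] at hthis
    have hdetH : (Gc⁻¹).det ≠ 0 := by
      have h1 : (Gc⁻¹).det * Gc.det = 1 := by rw [← Matrix.det_mul, hHG, Matrix.det_one]
      intro h0; rw [h0, zero_mul] at h1; exact zero_ne_one h1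
    exact (mul_eq_zero.mp hthis).resolve_left hdetH
  have hzne : z ≠ 0 := by
    rintro rfl
    rw [zero_smul, zero_sub, Matrix.det_neg, Matrix.det_one, mul_one] at hdet2
    simpa using hdet2
  have hfact2 : (z • Gc - 1 : Matrix (Fin d) (Fin d) ℂ)
      = -(z • (z⁻¹ • (1 : Matrix (Fin d) (Fin d) ℂ) - Gc)) := by
    rw [smul_sub, smul_smul, mul_inv_cancel₀ hzne, one_smul, neg_sub]
  have hdet3 : (z⁻¹ • (1 : Matrix (Fin d) (Fin d) ℂ) - Gc).det = 0 := by
    rw [hfact2, Matrix.det_neg, Matrix.det_smul] at hdet2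
    have h1 : ((-1 : ℂ) ^ (Fintype.card (Fin d))) ≠ 0 := by
      apply pow_ne_zero; norm_num
    have h2 : (z ^ (Fintype.card (Fin d))) ≠ 0 := pow_ne_zero _ hzne
    rw [mul_eq_zero] at hdet2
    rcases hdet2 with h | h
    · exact absurd h (by simpa [Fintype.card_fin] using h2)
    · exact (mul_eq_zero.mp h).resolve_left h2
  have hroot : Gc.charpoly.IsRoot z⁻¹ := by
    rw [Polynomial.IsRoot, eval_charpoly, hdet3]
  have hlt := hG z⁻¹ hroot
  rw [norm_inv] at hlt
  have habs : 0 < ‖z‖ := by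
    exact norm_pos_iff.mpr hzne
  rw [lt_inv_comm₀ (by norm_num) habs] at hlt
  simpa using hlt

end Inverse

section Analysis

attribute [local instance] Matrix.linftyOpNormedRing Matrix.linftyOpNormedAlgebra

noncomputable instance : CompleteSpace (Matrix (Fin d) (Fin d) ℂ) :=
  inferInstanceAs (CompleteSpace (Fin d → Fin d → ℂ))

lemma entry_norm_le (A : Matrix (Fin d) (Fin d) ℂ) (i j : Fin d) : ‖A i j‖ ≤ ‖A‖ := by
  have h1 : ‖A i j‖₊ ≤ ∑ j' : Fin d, ‖A i j'‖₊ :=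
    Finset.single_le_sum (f := fun j' => ‖A i j'‖₊) (fun _ _ => zero_le) (Finset.mem_univ j)
  have h2 : (∑ j' : Fin d, ‖A i j'‖₊) ≤ ‖A‖₊ := by
    rw [Matrix.linfty_opNNNorm_def]
    exact Finset.le_sup (f := fun i => ∑ j' : Fin d, ‖A i j'‖₊) (Finset.mem_univ i)
  exact_mod_cast h1.trans h2

variable (hd : 1 ≤ d) (H : Matrix (Fin d) (Fin d) ℂ)
  (hroots : ∀ z : ℂ, H.charpoly.IsRoot z → ‖z‖ < 1)

include hd hroots in
lemma spectralRadius_lt_one : spectralRadius ℂ H < 1 := by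
  have : Nonempty (Fin d) := Fin.pos_iff_nonempty.mp hd
  have h1 : ∀ z ∈ spectrum ℂ H, ‖z‖₊ < 1 := by
    intro z hz
    have hz' : ¬ IsUnit (algebraMap ℂ (Matrix (Fin d) (Fin d) ℂ) z - H) := spectrum.mem_iff.mp hz
    have hdet : (z • (1 : Matrix (Fin d) (Fin d) ℂ) - H).det = 0 := by
      by_contra hne
      exact hz' (by
        rw [Matrix.isUnit_iff_isUnit_det]
        rw [show algebraMap ℂ (Matrix (Fin d) (Fin d) ℂ) z = z • 1 by
          rw [Algebra.algebraMap_eq_smul_one]]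
        exact isUnit_iff_ne_zero.mpr hne)
    have hroot : H.charpoly.IsRoot z := by
      rw [Polynomial.IsRoot, eval_charpoly, hdet]
    have hlt := hroots z hroot
    rw [← NNReal.coe_lt_coe]
    simpa [Complex.norm_def] using hlt
  have h2 := spectrum.spectralRadius_lt_of_forall_lt H h1
  simpa using h2

include hd hroots in
lemma norm_pow_tendsto_zero :
    Filter.Tendsto (fun m : ℕ => ‖H ^ m‖) Filter.atTop (nhds 0) := by
  have : Nonempty (Fin d) := Fin.pos_iff_nonempty.mp hd
  have hρ : spectralRadius ℂ H < 1 := spectralRadius_lt_one hd H hroots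
  obtain ⟨r, hr1, hr2⟩ := exists_between hρ
  have hrtop : r ≠ ⊤ := (hr2.trans_le le_top).ne
  have hgel := spectrum.pow_nnnorm_pow_one_div_tendsto_nhds_spectralRadius H
  have hev : ∀ᶠ m : ℕ in Filter.atTop,
      (‖H ^ m‖₊ : ENNReal) ^ (1 / (m : ℝ)) < r := hgel.eventually_lt_const hr1
  have hev2 : ∀ᶠ m : ℕ in Filter.atTop, ‖H ^ m‖ ≤ r.toReal ^ m := by
    filter_upwards [hev, Filter.eventually_ge_atTop 1] with m hm hm1
    have hm0 : (m : ℝ) ≠ 0 := by positivity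
    have h3 : ((‖H ^ m‖₊ : ENNReal) ^ (1 / (m : ℝ))) ^ (m : ℝ) ≤ r ^ (m : ℝ) :=
      ENNReal.rpow_le_rpow hm.le (by positivity)
    rw [← ENNReal.rpow_mul, one_div, inv_mul_cancel₀ hm0, ENNReal.rpow_one] at h3
    have h4 : (‖H ^ m‖₊ : ENNReal) ≤ r ^ m := by
      rwa [← ENNReal.rpow_natCast r m]
    have h5 : ‖H ^ m‖ ≤ (r ^ m).toReal := by
      have h6 := ENNReal.toReal_mono (ENNReal.pow_ne_top hrtop) h4
      simpa using h6
    rw [ENNReal.toReal_pow] at h5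
    exact h5
  have hr3 : r.toReal < 1 := by
    rw [← ENNReal.toReal_one]
    exact ENNReal.toReal_strict_mono (by simp) hr2
  refine squeeze_zero' (Filter.Eventually.of_forall fun m => norm_nonneg _) hev2 ?_
  exact tendsto_pow_atTop_nhds_zero_of_lt_one ENNReal.toReal_nonneg hr3

end Analysis


section Main

attribute [local instance] Matrix.linftyOpNormedRing Matrix.linftyOpNormedAlgebra

theorem main_aux {d : ℕ} (hd : 1 ≤ d)
    (G : Matrix (Fin d) (Fin d) ℤ)
    (hG : ∀ z : ℂ, (Matrix.charpoly (G.map (Int.cast : ℤ → ℂ))).IsRoot z → 1 < ‖z‖)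
    (k : ℕ) (hk1 : 1 ≤ k) (hkd : k ≤ d) :
    ((1 : Matrix {s : Finset (Fin d) // s.card = k} {s : Finset (Fin d) // s.card = k} ℤ)
        - Matrix.of (fun I J : {s : Finset (Fin d) // s.card = k} => minorJI G J I)).det
      ≠ 0 := by
  classical
  intro hdet0
  set Gc : Matrix (Fin d) (Fin d) ℂ := G.map (Int.cast : ℤ → ℂ) with hGc
  -- rewrite the matrix in the statement as a transpose of the compound matrix
  have hBT : Matrix.of (fun I J : Idx d k => minorJI G J I) = (cpd k G)ᵀ := rfl
  have h1 : ((1 : Matrix (Idx d k) (Idx d k) ℤ) - cpd k G).det = 0 := by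
    rw [← Matrix.det_transpose, Matrix.transpose_sub, Matrix.transpose_one, ← hBT]
    exact hdet0
  -- transfer to ℂ
  have hdetC : ((1 : Matrix (Idx d k) (Idx d k) ℂ) - cpd k Gc).det = 0 := by
    have hmap : ((Int.castRingHom ℂ).mapMatrix ((1 : Matrix (Idx d k) (Idx d k) ℤ) - cpd k G))
        = (1 : Matrix (Idx d k) (Idx d k) ℂ) - cpd k Gc := by
      rw [map_sub, _root_.map_one, RingHom.mapMatrix_apply, ← cpd_map, hGc]
      rfl
    have h2 := RingHom.map_det (Int.castRingHom ℂ) ((1 : Matrix (Idx d k) (Idx d k) ℤ) - cpd k G)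
    rw [h1, hmap] at h2
    simpa using h2.symm
  -- eigenvector with eigenvalue 1
  obtain ⟨v, hv0, hveq⟩ := (Matrix.exists_mulVec_eq_zero_iff).mpr hdetC
  have hCv : (cpd k Gc).mulVec v = v := by
    rw [Matrix.sub_mulVec, Matrix.one_mulVec, sub_eq_zero] at hveq
    exact hveq.symm
  have hdetG : IsUnit Gc.det := isUnit_iff_ne_zero.mpr (det_Gc_ne_zero Gc hG)
  have hHG : Gc⁻¹ * Gc = 1 := Matrix.nonsing_inv_mul Gc hdetG
  set H : Matrix (Fin d) (Fin d) ℂ := Gc⁻¹ with hH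
  have hHv : (cpd k H).mulVec v = v := by
    calc (cpd k H).mulVec v = (cpd k H).mulVec ((cpd k Gc).mulVec v) := by rw [hCv]
      _ = ((cpd k H) * (cpd k Gc)).mulVec v := by rw [Matrix.mulVec_mulVec]
      _ = v := by rw [← cpd_mul, hHG, cpd_one, Matrix.one_mulVec]
  have hHm : ∀ m : ℕ, (cpd k (H ^ m)).mulVec v = v := by
    intro m
    induction m with
    | zero => rw [pow_zero, cpd_one, Matrix.one_mulVec]
    | succ n ih => rw [pow_succ, cpd_mul, ← Matrix.mulVec_mulVec, hHv, ih]
  obtain ⟨I₀, hI₀⟩ := Function.ne_iff.mp hv0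
  have hroots : ∀ z : ℂ, H.charpoly.IsRoot z → ‖z‖ < 1 := inv_root_lt_one Gc hG
  have htend := norm_pow_tendsto_zero hd H hroots
  have key : ∀ m : ℕ,
      ‖v I₀‖ ≤ (∑ J : Idx d k, ‖v J‖) * ((Nat.factorial k) * ‖H ^ m‖ ^ k) := by
    intro m
    have h2 : v I₀ = ∑ J : Idx d k, cpd k (H ^ m) I₀ J * v J := by
      conv_lhs => rw [← hHm m]
      simp [Matrix.mulVec, dotProduct]
    rw [h2]
    calc ‖∑ J : Idx d k, cpd k (H ^ m) I₀ J * v J‖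
        ≤ ∑ J : Idx d k, ‖cpd k (H ^ m) I₀ J‖ * ‖v J‖ := by
          refine (norm_sum_le _ _).trans ?_
          refine Finset.sum_le_sum fun J _ => ?_
          rw [norm_mul]
      _ ≤ ∑ J : Idx d k, ((Nat.factorial k) * ‖H ^ m‖ ^ k) * ‖v J‖ := by
          refine Finset.sum_le_sum fun J _ => ?_
          refine mul_le_mul_of_nonneg_right ?_ (norm_nonneg _)
          refine norm_det_le _ _ fun i j => ?_
          rw [Matrix.submatrix_apply]
          exact entry_norm_le _ _ _
      _ = (∑ J : Idx d k, ‖v J‖) * ((Nat.factorial k) * ‖H ^ m‖ ^ k) := by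
          rw [← Finset.mul_sum, mul_comm]
  have hlim : Filter.Tendsto
      (fun m : ℕ => (∑ J : Idx d k, ‖v J‖) * ((Nat.factorial k) * ‖H ^ m‖ ^ k))
      Filter.atTop (nhds 0) := by
    have h3 : Filter.Tendsto (fun m : ℕ => ‖H ^ m‖ ^ k) Filter.atTop (nhds 0) := by
      have h4 := htend.pow k
      simpa [zero_pow (Nat.one_le_iff_ne_zero.mp hk1)] using h4
    have h5 := (h3.const_mul ((Nat.factorial k : ℝ))).const_mul (∑ J : Idx d k, ‖v J‖)
    simpa using h5
  have hle : ‖v I₀‖ ≤ 0 := ge_of_tendsto' hlim key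
  exact hI₀ (norm_eq_zero.mp (le_antisymm hle (norm_nonneg _)))

end Main

end CompoundAux

/-- If `G ∈ M_d(ℤ)` is an integer dilation matrix, i.e. every complex eigenvalue `λ` of `G`
(root of its characteristic polynomial) satisfies `|λ| > 1`, then for each `1 ≤ k ≤ d` the
matrix `B_k = (det G_{J,I})_{I,J}` indexed by `k`-element subsets of `{1,…,d}` satisfies
`det(1 − B_k) ≠ 0`; that is, `1` is not an eigenvalue of `B_k`. -/
theorem det_one_sub_compound_ne_zero_of_dilation {d : ℕ} (hd : 1 ≤ d)
    (G : Matrix (Fin d) (Fin d) ℤ)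
    (hG : ∀ z : ℂ, (Matrix.charpoly (G.map (Int.cast : ℤ → ℂ))).IsRoot z → 1 < ‖z‖)
    (k : ℕ) (hk1 : 1 ≤ k) (hkd : k ≤ d) :
    ((1 : Matrix {s : Finset (Fin d) // s.card = k} {s : Finset (Fin d) // s.card = k} ℤ)
        - Matrix.of (fun I J : {s : Finset (Fin d) // s.card = k} => minorJI G J I)).det
      ≠ 0 :=
  CompoundAux.main_aux hd G hG k hk1 hkd
end
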